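/- Under the same setup, for any two diagonal sign matrices Σ, Σ̃, ‖J^{-1}(J_{σ̃} - J_σ)‖_p ≤ 2ρ̂/(1 - ‖L‖_p)^2. -/
import Mathlib


/-- An operator norm family induced by an absolute (monotone) vector norm,
abstracting the induced matrix p-norms. -/
structure PNormFamily where
  /-- the vector norm -/
  vnorm : ∀ {k : ℕ}, (Fin k → ℝ) → ℝ
  /-- the induced matrix norm -/
  mnorm : ∀ {m k : ℕ}, Matrix (Fin m) (Fin k) ℝ → ℝ
  vnorm_nonneg : ∀ {k : ℕ} (x : Fin k → ℝ), 0 ≤ vnorm x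
  vnorm_eq_zero_iff : ∀ {k : ℕ} (x : Fin k → ℝ), vnorm x = 0 ↔ x = 0
  vnorm_add_le : ∀ {k : ℕ} (x y : Fin k → ℝ), vnorm (x + y) ≤ vnorm x + vnorm y
  vnorm_smul : ∀ {k : ℕ} (c : ℝ) (x : Fin k → ℝ), vnorm (c • x) = |c| * vnorm x
  vnorm_mono : ∀ {k : ℕ} (x y : Fin k → ℝ), (∀ i, |x i| ≤ |y i|) → vnorm x ≤ vnorm y
  mnorm_spec : ∀ {m k : ℕ} (A : Matrix (Fin m) (Fin k) ℝ) (x : Fin k → ℝ),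
    vnorm (A.mulVec x) ≤ mnorm A * vnorm x
  mnorm_le : ∀ {m k : ℕ} (A : Matrix (Fin m) (Fin k) ℝ) (c : ℝ), 0 ≤ c →
    (∀ x : Fin k → ℝ, vnorm (A.mulVec x) ≤ c * vnorm x) → mnorm A ≤ c

namespace PNormFamily

lemma vnorm_zero (P : PNormFamily) (k : ℕ) : P.vnorm (0 : Fin k → ℝ) = 0 :=
  (P.vnorm_eq_zero_iff 0).mpr rfl

lemma vnorm_pos (P : PNormFamily) {k : ℕ} (x : Fin k → ℝ) (hx : x ≠ 0) :
    0 < P.vnorm x :=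
  lt_of_le_of_ne (P.vnorm_nonneg x) fun h => hx ((P.vnorm_eq_zero_iff x).mp h.symm)

lemma mnorm_nonneg_of_pos (P : PNormFamily) {m k : ℕ} (hk : 0 < k)
    (A : Matrix (Fin m) (Fin k) ℝ) : 0 ≤ P.mnorm A := by
  have hx : (fun _ : Fin k => (1:ℝ)) ≠ 0 := by
    intro h
    have := congrFun h ⟨0, hk⟩
    simp at this
  have hv : 0 < P.vnorm (fun _ : Fin k => (1:ℝ)) := P.vnorm_pos _ hx
  have h1 : 0 ≤ P.vnorm (A.mulVec fun _ => (1:ℝ)) := P.vnorm_nonneg _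
  have h2 := P.mnorm_spec A (fun _ => (1:ℝ))
  nlinarith

lemma mnorm_nonpos_of_zero_rows (P : PNormFamily) {k : ℕ}
    (A : Matrix (Fin 0) (Fin k) ℝ) : P.mnorm A ≤ 0 := by
  refine P.mnorm_le A 0 le_rfl fun x => ?_
  have hz : A.mulVec x = 0 := funext fun i => i.elim0
  rw [hz, P.vnorm_zero, zero_mul]

lemma vnorm_diag_mulVec (P : PNormFamily) {k : ℕ} (d : Fin k → ℝ) (c : ℝ) (hc : 0 ≤ c)
    (hd : ∀ i, |d i| ≤ c) (x : Fin k → ℝ) :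
    P.vnorm ((Matrix.diagonal d).mulVec x) ≤ c * P.vnorm x := by
  have h : ∀ i, |((Matrix.diagonal d).mulVec x) i| ≤ |(c • x) i| := by
    intro i
    rw [Matrix.mulVec_diagonal]
    simp only [Pi.smul_apply, smul_eq_mul, abs_mul]
    exact mul_le_mul_of_nonneg_right (by rw [abs_of_nonneg hc] at *; exact hd i) (abs_nonneg _)
  calc P.vnorm ((Matrix.diagonal d).mulVec x) ≤ P.vnorm (c • x) := P.vnorm_mono _ _ h
  _ = c * P.vnorm x := by rw [P.vnorm_smul, abs_of_nonneg hc]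

end PNormFamily

lemma sign_abs_le_one {s : ℕ} (σ : Fin s → ℝ)
    (hσ : ∀ i, σ i = 1 ∨ σ i = -1 ∨ σ i = 0) : ∀ i, |σ i| ≤ 1 := by
  intro i
  rcases hσ i with h | h | h <;> rw [h] <;> norm_num

lemma det_one_sub_mul_diag {s : ℕ} (L : Matrix (Fin s) (Fin s) ℝ)
    (hL : ∀ i j : Fin s, i ≤ j → L i j = 0) (σ : Fin s → ℝ) :
    (1 - L * Matrix.diagonal σ).det = 1 := by
  rw [Matrix.det_of_lowerTriangular]
  · have : ∀ i : Fin s, (1 - L * Matrix.diagonal σ) i i = 1 := by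
      intro i
      simp [Matrix.sub_apply, Matrix.one_apply, Matrix.mul_diagonal, hL i i le_rfl]
    simp [this]
  · intro i j hij
    have hij' : i < j := hij
    simp [Matrix.sub_apply, Matrix.one_apply, Matrix.mul_diagonal, hL i j hij'.le,
      Fin.ne_of_lt hij']

lemma inv_mulVec_bound (P : PNormFamily) {s : ℕ} (L : Matrix (Fin s) (Fin s) ℝ)
    (hL : ∀ i j : Fin s, i ≤ j → L i j = 0)
    (hLnn : 0 ≤ P.mnorm L) (hL1 : P.mnorm L < 1)
    (σ : Fin s → ℝ) (hσ1 : ∀ i, |σ i| ≤ 1) (x : Fin s → ℝ) :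
    P.vnorm ((1 - L * Matrix.diagonal σ)⁻¹.mulVec x)
      ≤ (1 - P.mnorm L)⁻¹ * P.vnorm x := by
  set A : Matrix (Fin s) (Fin s) ℝ := 1 - L * Matrix.diagonal σ with hA
  have hdet : IsUnit A.det := by rw [det_one_sub_mul_diag L hL σ]; exact isUnit_one
  set y : Fin s → ℝ := A⁻¹.mulVec x with hy
  have hAy : A.mulVec y = x := by
    rw [hy, Matrix.mulVec_mulVec, Matrix.mul_nonsing_inv A hdet, Matrix.one_mulVec]
  have hyx : y = x + (L * Matrix.diagonal σ).mulVec y := by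
    have h1 : A.mulVec y = y - (L * Matrix.diagonal σ).mulVec y := by
      rw [hA, Matrix.sub_mulVec, Matrix.one_mulVec]
    rw [h1] at hAy
    rw [← hAy]; abel
  have hb : P.vnorm ((L * Matrix.diagonal σ).mulVec y) ≤ P.mnorm L * P.vnorm y := by
    rw [← Matrix.mulVec_mulVec]
    calc P.vnorm (L.mulVec ((Matrix.diagonal σ).mulVec y))
        ≤ P.mnorm L * P.vnorm ((Matrix.diagonal σ).mulVec y) := P.mnorm_spec _ _
      _ ≤ P.mnorm L * (1 * P.vnorm y) :=
          mul_le_mul_of_nonneg_left (P.vnorm_diag_mulVec σ 1 zero_le_one hσ1 y) hLnn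
      _ = P.mnorm L * P.vnorm y := by ring
  have key : P.vnorm y ≤ P.vnorm x + P.mnorm L * P.vnorm y := by
    calc P.vnorm y = P.vnorm (x + (L * Matrix.diagonal σ).mulVec y) := by rw [← hyx]
    _ ≤ P.vnorm x + P.vnorm ((L * Matrix.diagonal σ).mulVec y) := P.vnorm_add_le _ _
    _ ≤ P.vnorm x + P.mnorm L * P.vnorm y := by linarith
  have hpos : (0:ℝ) < 1 - P.mnorm L := by linarith
  rw [inv_mul_eq_div, le_div_iff₀ hpos]
  nlinarith [P.vnorm_nonneg y]

/-- Bound on the relative deviation between two limiting Jacobians: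
`‖J⁻¹(J_σ̃ - J_σ)‖ ≤ 2ρ̂/(1-‖L‖)²` where `ρ̂ = ‖J⁻¹Y‖‖Z‖`. -/
theorem jacobian_difference_norm_bound
    (n s : ℕ) (P : PNormFamily)
    (J : Matrix (Fin n) (Fin n) ℝ) (Y : Matrix (Fin n) (Fin s) ℝ)
    (Z : Matrix (Fin s) (Fin n) ℝ) (L : Matrix (Fin s) (Fin s) ℝ)
    (hJ : IsUnit J)
    (hL : ∀ i j : Fin s, i ≤ j → L i j = 0)
    (hLnorm : P.mnorm L < 1)
    (rhoHat : ℝ) (hrho : rhoHat = P.mnorm (J⁻¹ * Y) * P.mnorm Z)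
    (σ σ' : Fin s → ℝ)
    (hσ : ∀ i, σ i = 1 ∨ σ i = -1 ∨ σ i = 0)
    (hσ' : ∀ i, σ' i = 1 ∨ σ' i = -1 ∨ σ' i = 0) :
    P.mnorm (J⁻¹ *
        ((J + Y * Matrix.diagonal σ' * (1 - L * Matrix.diagonal σ')⁻¹ * Z) -
          (J + Y * Matrix.diagonal σ * (1 - L * Matrix.diagonal σ)⁻¹ * Z)))
      ≤ 2 * rhoHat / (1 - P.mnorm L) ^ 2 := by
  have hpos : (0:ℝ) < 1 - P.mnorm L := by linarith
  have hsq : (0:ℝ) < (1 - P.mnorm L) ^ 2 := by positivity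
  rcases Nat.eq_zero_or_pos n with hn | hn
  · subst hn
    have hlhs : P.mnorm (J⁻¹ *
        ((J + Y * Matrix.diagonal σ' * (1 - L * Matrix.diagonal σ')⁻¹ * Z) -
          (J + Y * Matrix.diagonal σ * (1 - L * Matrix.diagonal σ)⁻¹ * Z))) ≤ 0 :=
      P.mnorm_nonpos_of_zero_rows _
    have h1 : P.mnorm (J⁻¹ * Y) ≤ 0 := P.mnorm_nonpos_of_zero_rows _
    have h2 : P.mnorm Z ≤ 0 := by
      refine P.mnorm_le Z 0 le_rfl fun x => ?_
      have hx : x = 0 := funext fun i => i.elim0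
      rw [hx, Matrix.mulVec_zero, P.vnorm_zero, zero_mul]
    have hr : 0 ≤ rhoHat := by
      rw [hrho]; nlinarith [mul_nonneg (neg_nonneg.2 h1) (neg_nonneg.2 h2)]
    have : (0:ℝ) ≤ 2 * rhoHat / (1 - P.mnorm L) ^ 2 := by positivity
    linarith
  rcases Nat.eq_zero_or_pos s with hs | hs
  · subst hs
    have hgen : ∀ (A B : Matrix (Fin n) (Fin 0) ℝ) (C E : Matrix (Fin 0) (Fin n) ℝ),
        A * C = B * E := by
      intro A B C E
      ext i j
      rw [Matrix.mul_apply, Matrix.mul_apply]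
      simp
    have hzero : (Y * Matrix.diagonal σ' * (1 - L * Matrix.diagonal σ')⁻¹ * Z)
        = (Y * Matrix.diagonal σ * (1 - L * Matrix.diagonal σ)⁻¹ * Z) := hgen _ _ _ _
    have hmat : J⁻¹ *
        ((J + Y * Matrix.diagonal σ' * (1 - L * Matrix.diagonal σ')⁻¹ * Z) -
          (J + Y * Matrix.diagonal σ * (1 - L * Matrix.diagonal σ)⁻¹ * Z)) = 0 := by
      rw [hzero]; simp
    rw [hmat]
    have hlhs : P.mnorm (0 : Matrix (Fin n) (Fin n) ℝ) ≤ 0 := by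
      refine P.mnorm_le _ 0 le_rfl fun x => ?_
      rw [Matrix.zero_mulVec, P.vnorm_zero, zero_mul]
    have h2a : P.mnorm Z ≤ 0 := by
      refine P.mnorm_le Z 0 le_rfl fun x => ?_
      have hz : Z.mulVec x = 0 := funext fun i => i.elim0
      rw [hz, P.vnorm_zero, zero_mul]
    have h2b : 0 ≤ P.mnorm Z := P.mnorm_nonneg_of_pos hn Z
    have hZ0 : P.mnorm Z = 0 := le_antisymm h2a h2b
    have hr : rhoHat = 0 := by rw [hrho, hZ0, mul_zero]
    rw [hr]
    simpa using hlhs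
  -- main case : 0 < n, 0 < s
  set ℓ : ℝ := P.mnorm L with hℓdef
  have hℓnn : 0 ≤ ℓ := P.mnorm_nonneg_of_pos hs L
  set D : Matrix (Fin s) (Fin s) ℝ := Matrix.diagonal σ with hD
  set D' : Matrix (Fin s) (Fin s) ℝ := Matrix.diagonal σ' with hD'
  set M : Matrix (Fin s) (Fin s) ℝ := (1 - L * D)⁻¹ with hM
  set M' : Matrix (Fin s) (Fin s) ℝ := (1 - L * D')⁻¹ with hM'
  have hdet : IsUnit (1 - L * D).det := by
    rw [det_one_sub_mul_diag L hL σ]; exact isUnit_one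
  have hdet' : IsUnit (1 - L * D').det := by
    rw [det_one_sub_mul_diag L hL σ']; exact isUnit_one
  have h1 : (1 - L * D) * M = 1 := Matrix.mul_nonsing_inv _ hdet
  have h2 : M' * (1 - L * D') = 1 := Matrix.nonsing_inv_mul _ hdet'
  have hσ1 : ∀ i, |σ i| ≤ 1 := sign_abs_le_one σ hσ
  have hσ1' : ∀ i, |σ' i| ≤ 1 := sign_abs_le_one σ' hσ'
  have hσd : ∀ i, |σ' i - σ i| ≤ 2 := by
    intro i
    calc |σ' i - σ i| ≤ |σ' i| + |σ i| := abs_sub _ _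
    _ ≤ 2 := by linarith [hσ1 i, hσ1' i]
  -- matrix identity
  have hdiff : M' - M = M' * (L * (D' - D)) * M := by
    calc M' - M = M' * ((1 - L * D) * M) - (M' * (1 - L * D')) * M := by
          rw [h1, h2, mul_one, one_mul]
      _ = M' * (L * (D' - D)) * M := by
          simp only [mul_sub, sub_mul, one_mul, mul_one, mul_assoc]
          abel
  have hK : D' * M' - D * M
      = Matrix.diagonal (fun i => σ' i - σ i) * M'
        + D * (M' * (L * (Matrix.diagonal (fun i => σ' i - σ i) * M))) := by
    have hDD : Matrix.diagonal (fun i => σ' i - σ i) = D' - D := by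
      rw [hD, hD', Matrix.diagonal_sub]
    rw [hDD]
    have : D' * M' - D * M = (D' - D) * M' + D * (M' - M) := by
      simp only [sub_mul, mul_sub]
      abel
    rw [this, hdiff]
    simp only [mul_assoc]
  -- vector bound for K
  have hKbound : ∀ w : Fin s → ℝ,
      P.vnorm ((D' * M' - D * M).mulVec w) ≤ 2 / (1 - ℓ) ^ 2 * P.vnorm w := by
    intro w
    have hMb : ∀ v : Fin s → ℝ, P.vnorm (M.mulVec v) ≤ (1 - ℓ)⁻¹ * P.vnorm v :=
      fun v => inv_mulVec_bound P L hL hℓnn hLnorm σ hσ1 v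
    have hMb' : ∀ v : Fin s → ℝ, P.vnorm (M'.mulVec v) ≤ (1 - ℓ)⁻¹ * P.vnorm v :=
      fun v => inv_mulVec_bound P L hL hℓnn hLnorm σ' hσ1' v
    have hc1 : (0:ℝ) ≤ (1 - ℓ)⁻¹ := by positivity
    rw [hK, Matrix.add_mulVec]
    have e1 : (Matrix.diagonal (fun i => σ' i - σ i) * M').mulVec w
        = (Matrix.diagonal (fun i => σ' i - σ i)).mulVec (M'.mulVec w) := by
      rw [Matrix.mulVec_mulVec]
    have e2 : (D * (M' * (L * (Matrix.diagonal (fun i => σ' i - σ i) * M)))).mulVec w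
        = D.mulVec (M'.mulVec (L.mulVec
            ((Matrix.diagonal (fun i => σ' i - σ i)).mulVec (M.mulVec w)))) := by
      simp only [Matrix.mulVec_mulVec, Matrix.mul_assoc]
    rw [e1, e2]
    set W := P.vnorm w with hW
    have hWnn : 0 ≤ W := P.vnorm_nonneg w
    -- branch 1
    have b1 : P.vnorm ((Matrix.diagonal (fun i => σ' i - σ i)).mulVec (M'.mulVec w))
        ≤ 2 * ((1 - ℓ)⁻¹ * W) := by
      calc P.vnorm ((Matrix.diagonal (fun i => σ' i - σ i)).mulVec (M'.mulVec w))
          ≤ 2 * P.vnorm (M'.mulVec w) :=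
            P.vnorm_diag_mulVec _ 2 (by norm_num) hσd _
        _ ≤ 2 * ((1 - ℓ)⁻¹ * W) := by
            have := hMb' w; linarith [this]
    -- branch 2
    have t0 : P.vnorm (M.mulVec w) ≤ (1 - ℓ)⁻¹ * W := hMb w
    have t1 : P.vnorm ((Matrix.diagonal (fun i => σ' i - σ i)).mulVec (M.mulVec w))
        ≤ 2 * ((1 - ℓ)⁻¹ * W) := by
      calc P.vnorm ((Matrix.diagonal (fun i => σ' i - σ i)).mulVec (M.mulVec w))
          ≤ 2 * P.vnorm (M.mulVec w) := P.vnorm_diag_mulVec _ 2 (by norm_num) hσd _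
        _ ≤ 2 * ((1 - ℓ)⁻¹ * W) := by linarith
    have t2 : P.vnorm (L.mulVec ((Matrix.diagonal (fun i => σ' i - σ i)).mulVec (M.mulVec w)))
        ≤ ℓ * (2 * ((1 - ℓ)⁻¹ * W)) := by
      calc P.vnorm (L.mulVec _) ≤ ℓ * P.vnorm _ := P.mnorm_spec L _
        _ ≤ ℓ * (2 * ((1 - ℓ)⁻¹ * W)) := mul_le_mul_of_nonneg_left t1 hℓnn
    have t3 : P.vnorm (M'.mulVec (L.mulVec
        ((Matrix.diagonal (fun i => σ' i - σ i)).mulVec (M.mulVec w))))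
        ≤ (1 - ℓ)⁻¹ * (ℓ * (2 * ((1 - ℓ)⁻¹ * W))) := by
      calc P.vnorm (M'.mulVec _) ≤ (1 - ℓ)⁻¹ * P.vnorm _ := hMb' _
        _ ≤ (1 - ℓ)⁻¹ * (ℓ * (2 * ((1 - ℓ)⁻¹ * W))) :=
            mul_le_mul_of_nonneg_left t2 hc1
    have t4 : P.vnorm (D.mulVec (M'.mulVec (L.mulVec
        ((Matrix.diagonal (fun i => σ' i - σ i)).mulVec (M.mulVec w)))))
        ≤ (1 - ℓ)⁻¹ * (ℓ * (2 * ((1 - ℓ)⁻¹ * W))) := by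
      calc P.vnorm (D.mulVec _) ≤ 1 * P.vnorm _ :=
            P.vnorm_diag_mulVec σ 1 zero_le_one hσ1 _
        _ = P.vnorm _ := one_mul _
        _ ≤ _ := t3
    have hsum := P.vnorm_add_le
      ((Matrix.diagonal (fun i => σ' i - σ i)).mulVec (M'.mulVec w))
      (D.mulVec (M'.mulVec (L.mulVec
        ((Matrix.diagonal (fun i => σ' i - σ i)).mulVec (M.mulVec w)))))
    have harith : 2 * ((1 - ℓ)⁻¹ * W) + (1 - ℓ)⁻¹ * (ℓ * (2 * ((1 - ℓ)⁻¹ * W)))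
        = 2 / (1 - ℓ) ^ 2 * W := by
      field_simp
      ring
    linarith
  -- final assembly
  have hE : J⁻¹ * ((J + Y * D' * M' * Z) - (J + Y * D * M * Z))
      = (J⁻¹ * Y) * ((D' * M' - D * M) * Z) := by
    simp only [add_sub_add_left_eq_sub, Matrix.sub_mul, Matrix.mul_sub, Matrix.mul_assoc]
  rw [hE]
  have ha : 0 ≤ P.mnorm (J⁻¹ * Y) := P.mnorm_nonneg_of_pos hs _
  have hb : 0 ≤ P.mnorm Z := P.mnorm_nonneg_of_pos hn Z
  have hcnn : 0 ≤ 2 * rhoHat / (1 - ℓ) ^ 2 := by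
    rw [hrho]; positivity
  refine P.mnorm_le _ _ hcnn fun x => ?_
  have ed : ((J⁻¹ * Y) * ((D' * M' - D * M) * Z)).mulVec x
      = (J⁻¹ * Y).mulVec ((D' * M' - D * M).mulVec (Z.mulVec x)) := by
    simp only [Matrix.mulVec_mulVec, Matrix.mul_assoc]
  rw [ed]
  have s1 : P.vnorm ((J⁻¹ * Y).mulVec ((D' * M' - D * M).mulVec (Z.mulVec x)))
      ≤ P.mnorm (J⁻¹ * Y) * P.vnorm ((D' * M' - D * M).mulVec (Z.mulVec x)) :=
    P.mnorm_spec _ _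
  have s2 : P.vnorm ((D' * M' - D * M).mulVec (Z.mulVec x))
      ≤ 2 / (1 - ℓ) ^ 2 * P.vnorm (Z.mulVec x) := hKbound _
  have s3 : P.vnorm (Z.mulVec x) ≤ P.mnorm Z * P.vnorm x := P.mnorm_spec _ _
  have hfrac : (0:ℝ) ≤ 2 / (1 - ℓ) ^ 2 := by positivity
  calc P.vnorm ((J⁻¹ * Y).mulVec ((D' * M' - D * M).mulVec (Z.mulVec x)))
      ≤ P.mnorm (J⁻¹ * Y) * (2 / (1 - ℓ) ^ 2 * P.vnorm (Z.mulVec x)) := by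
        refine le_trans s1 (mul_le_mul_of_nonneg_left s2 ha)
    _ ≤ P.mnorm (J⁻¹ * Y) * (2 / (1 - ℓ) ^ 2 * (P.mnorm Z * P.vnorm x)) := by
        refine mul_le_mul_of_nonneg_left (mul_le_mul_of_nonneg_left s3 hfrac) ha
    _ = 2 * rhoHat / (1 - ℓ) ^ 2 * P.vnorm x := by rw [hrho]; ring
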